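/- Let $B_{n,l,m,0} \subseteq \Sigma$ be sets satisfying $B_{n,l,m,0} \subseteq \bigcup_{|\overline{\imath}|=q} \varrho_{\overline{\imath}}(B_{n,l,m,0})$ for all $q\geq 1$ (where $\varrho_{\overline{\imath}}(\mathbf{i}) = \overline{\imath}\mathbf{i}$ is prepending), and suppose there exist $n_0, l_0, m_0$ and a word $\overline{\jmath}$ of length $l_0$ with $B_{n_0,l_0,m_0,0} \cap [\overline{\jmath}] = \emptyset$ and such that $B_{n_0,l_0,m_0,0} \subseteq \bigcup_{|\overline{\imath}|=l_0, \overline{\imath}\neq\overline{\jmath}} \varrho_{\overline{\imath}}(B_{n_0,l_0,m_0,0})$. Then for every $\mathbf{i} \in B_{n_0,l_0,m_0,0}$ and every $p \geq 1$, $\sigma^p\mathbf{i} \notin [\overline{\jmath}]$. Consequently, any fully supported ergodic shift-invariant measure $\nu$ satisfies $\nu(B_{n_0,l_0,m_0,0}) = 0$. -/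

import Mathlib

open MeasureTheory Set

/-- The left shift on `Σ = {0,…,N-1}^ℕ`. -/
def shift {N : ℕ} (i : ℕ → Fin N) : ℕ → Fin N := fun m => i (m + 1)

/-- Prepending a finite word `w` of length `q` to a sequence. -/
def prepend {N q : ℕ} (w : Fin q → Fin N) (i : ℕ → Fin N) : ℕ → Fin N :=
  fun m => if h : m < q then w ⟨m, h⟩ else i (m - q)

lemma shift_iterate_apply {N : ℕ} (p : ℕ) (i : ℕ → Fin N) (m : ℕ) :
    (shift^[p] i) m = i (m + p) := by
  induction p generalizing i with
  | zero => rfl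
  | succ p ih =>
    rw [Function.iterate_succ_apply, ih]
    show i (m + p + 1) = i (m + (p + 1))
    ring_nf

lemma shift_iterate_prepend {N p : ℕ} (w : Fin p → Fin N) (j : ℕ → Fin N) :
    shift^[p] (prepend w j) = j := by
  funext m
  rw [shift_iterate_apply]
  simp only [prepend]
  rw [dif_neg (by omega)]
  congr 1
  omega

lemma shift_measurable {N : ℕ} : Measurable (shift (N := N)) :=
  measurable_pi_lambda _ fun m => measurable_pi_apply (m + 1)

theorem stmt11 {N : ℕ} (hN : 1 ≤ N) (B : Set (ℕ → Fin N))
    (hq : ∀ q : ℕ, 1 ≤ q → B ⊆ ⋃ w : Fin q → Fin N, prepend w '' B)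
    (l0 : ℕ) (hl0 : 1 ≤ l0) (jb : Fin l0 → Fin N)
    (hdisj : B ∩ {i | ∀ k : Fin l0, i k = jb k} = ∅)
    (hsub : B ⊆ ⋃ w : {w : Fin l0 → Fin N // w ≠ jb}, prepend w.1 '' B) :
    (∀ i ∈ B, ∀ p : ℕ, 1 ≤ p → ¬ (∀ k : Fin l0, (shift^[p] i) k = jb k)) ∧
    ∀ ν : Measure (ℕ → Fin N), IsProbabilityMeasure ν → Ergodic shift ν →
      (∀ (n : ℕ) (w : Fin n → Fin N), 0 < ν {i | ∀ k : Fin n, i k = w k}) →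
      ν B = 0 := by
  have key : ∀ i ∈ B, ∀ p : ℕ, 1 ≤ p → ¬ (∀ k : Fin l0, (shift^[p] i) k = jb k) := by
    intro i hi p hp hcon
    obtain ⟨S, ⟨w, rfl⟩, j, hj, rfl⟩ := hq p hp hi
    rw [shift_iterate_prepend] at hcon
    have : j ∈ B ∩ {i | ∀ k : Fin l0, i k = jb k} := ⟨hj, hcon⟩
    rw [hdisj] at this
    exact this
  refine ⟨key, fun ν hprob herg hfull => ?_⟩
  -- the cylinder set [jb]
  set J : Set (ℕ → Fin N) := {i | ∀ k : Fin l0, i k = jb k} with hJ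
  have hJm : MeasurableSet J := by
    have : J = ⋂ k : Fin l0, (fun i : ℕ → Fin N => i k) ⁻¹' {jb k} := by
      ext i; simp [hJ]
    rw [this]
    exact MeasurableSet.iInter fun k => (measurable_pi_apply _) (measurableSet_singleton _)
  set C : Set (ℕ → Fin N) := ⋂ p ∈ {p : ℕ | 1 ≤ p}, (shift^[p]) ⁻¹' Jᶜ with hC
  have hCm : MeasurableSet C :=
    MeasurableSet.biInter (Set.to_countable _)
      fun p _ => (shift_measurable.iterate p) hJm.compl
  have hBC : B ⊆ C := by
    intro i hi
    simp only [hC, Set.mem_iInter, Set.mem_preimage, Set.mem_compl_iff]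
    exact fun p hp => key i hi p hp
  have hCsub : C ⊆ shift ⁻¹' C := by
    intro i hi
    simp only [hC, Set.mem_iInter, Set.mem_preimage, Set.mem_compl_iff] at hi ⊢
    intro p hp
    have := hi (p + 1) (Set.mem_setOf_eq ▸ by omega)
    rwa [Function.iterate_succ_apply] at this
  have h01 := herg.ae_empty_or_univ_of_ae_le_preimage' hCm.nullMeasurableSet
    (HasSubset.Subset.eventuallyLE hCsub) (measure_ne_top ν C)
  rcases h01 with h | h
  · have : ν C = 0 := by
      rw [measure_congr h]; simp
    exact le_antisymm (this ▸ measure_mono hBC) zero_le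
  · -- ν C = 1, contradiction with ν (shift ⁻¹' J) > 0
    exfalso
    have hC1 : ν C = 1 := by
      rw [measure_congr h]; simp
    have hsubJ : shift ⁻¹' J ⊆ Cᶜ := by
      intro i hi hiC
      simp only [hC, Set.mem_iInter, Set.mem_preimage, Set.mem_compl_iff] at hiC
      exact hiC 1 (Set.mem_setOf_eq ▸ le_rfl) (by simpa using hi)
    have hνJ : 0 < ν (shift ⁻¹' J) := by
      rw [herg.measure_preimage hJm.nullMeasurableSet]
      exact hfull l0 jb
    have : ν Cᶜ = 0 := by
      rw [measure_compl hCm (measure_ne_top ν C), hC1, measure_univ]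
      simp
    exact absurd (le_antisymm (this ▸ measure_mono hsubJ) zero_le) hνJ.ne'
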